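/- Let T be an ℱ-flipped affine interval exchange transformation whose slope on the defining interval I_e has absolute value exp(θ_e). If z ∈ X_{L(T)} is a non-recurrent sequence, then both series Σ_{n≥0} exp(Σ_{j=0}^{n} θ_{z_j}) and Σ_{n>0} exp(−Σ_{j=−n}^{−1} θ_{z_j}) converge. -/

import Mathlib

open List Set

variable {A : Type*}

/-- A (factorial, extendable) language over an alphabet `A`. -/
def IsLanguage (L : Set (List A)) : Prop :=
  (∀ w ∈ L, ∀ v : List A, v <:+: w → v ∈ L) ∧
  (∀ w ∈ L, ∃ a : A, a :: w ∈ L) ∧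
  (∀ w ∈ L, ∃ a : A, w ++ [a] ∈ L)

/-- Arrival set `A(w)`. -/
def arrSet (L : Set (List A)) (w : List A) : Set A := {a | a :: w ∈ L}

/-- Departure set `D(w)`. -/
def depSet (L : Set (List A)) (w : List A) : Set A := {a | w ++ [a] ∈ L}

def Bispecial (L : Set (List A)) (w : List A) : Prop :=
  1 < (arrSet L w).ncard ∧ 1 < (depSet L w).ncard

/-- `m(w) = #{awb ∈ L}`. -/
noncomputable def extCount (L : Set (List A)) (w : List A) : ℕ :=
  {p : A × A | p.1 :: (w ++ [p.2]) ∈ L}.ncard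

def StrongBispecial (L : Set (List A)) (w : List A) : Prop :=
  Bispecial L w ∧ (arrSet L w).ncard + (depSet L w).ncard - 1 < extCount L w

def WeakBispecial (L : Set (List A)) (w : List A) : Prop :=
  Bispecial L w ∧ extCount L w < (arrSet L w).ncard + (depSet L w).ncard - 1

def LocallyStrongBispecial (L : Set (List A)) (w : List A) : Prop :=
  Bispecial L w ∧ ∃ A' D' : Set A, A'.Nonempty ∧ D'.Nonempty ∧
    A' ⊆ arrSet L w ∧ D' ⊆ depSet L w ∧
    A'.ncard + D'.ncard - 1 <
      {p : A × A | p.1 ∈ A' ∧ p.2 ∈ D' ∧ p.1 :: (w ++ [p.2]) ∈ L}.ncard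

/-- The order condition at a single bispecial word, for orders `rA`, `rD`. -/
def OrderConditionAt (L : Set (List A)) (w : List A) (rA rD : A → A → Prop) : Prop :=
  ∀ a b c d : A, a ≠ b → c ≠ d →
    a :: (w ++ [c]) ∈ L → b :: (w ++ [d]) ∈ L → (rA a b ↔ rD c d)

/-- The local order condition. -/
def LocalOrderCondition (L : Set (List A)) : Prop :=
  ∀ w : List A, Bispecial L w → ∃ rA rD : A → A → Prop,
    IsStrictTotalOrder A rA ∧ IsStrictTotalOrder A rD ∧ OrderConditionAt L w rA rD

/-- `a` and `a'` are consecutive in the strict order `r`. -/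
def ConsecutiveIn (r : A → A → Prop) (a a' : A) : Prop :=
  r a a' ∧ ∀ c : A, ¬ (r a c ∧ r c a')

/-- A connection for the bispecial word `w`, with respect to orders `rA`, `rD`. -/
def ConnectionWith (L : Set (List A)) (w : List A) (rA rD : A → A → Prop) : Prop :=
  ∃ a a' b b' : A, ConsecutiveIn rA a a' ∧ ConsecutiveIn rD b b' ∧
    a :: (w ++ [b]) ∈ L ∧ a' :: (w ++ [b']) ∈ L ∧
    a :: (w ++ [b']) ∉ L ∧ a' :: (w ++ [b]) ∉ L

/-- `w` has a connection (for some orders realizing the order condition at `w`). -/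
def HasConnection (L : Set (List A)) (w : List A) : Prop :=
  ∃ rA rD : A → A → Prop, IsStrictTotalOrder A rA ∧ IsStrictTotalOrder A rD ∧
    OrderConditionAt L w rA rD ∧ ConnectionWith L w rA rD

/-- Complexity function `p(n)`. -/
noncomputable def complexityFn (L : Set (List A)) (n : ℕ) : ℕ :=
  {w ∈ L | w.length = n}.ncard

def UniformlyRecurrent (L : Set (List A)) : Prop :=
  ∀ v ∈ L, ∃ n : ℕ, ∀ u ∈ L, u.length = n → v <:+: u

def LangRecurrent (L : Set (List A)) : Prop :=
  ∀ v ∈ L, ∃ u : List A, u ≠ [] ∧ v ++ u ∈ L ∧ v <:+ v ++ u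

def LangAperiodic (L : Set (List A)) : Prop :=
  ∀ w ∈ L, w ≠ [] → ∃ n : ℕ, (List.replicate n w).flatten ∉ L

def LeftSpecial (L : Set (List A)) (w : List A) : Prop := 1 < (arrSet L w).ncard

def RightSpecial (L : Set (List A)) (w : List A) : Prop := 1 < (depSet L w).ncard

/-- The two-sided subshift associated to `L`. -/
def XL (L : Set (List A)) : Set (ℤ → A) :=
  {x | ∀ (m : ℤ) (n : ℕ), (List.ofFn fun i : Fin n => x (m + (i : ℕ))) ∈ L}

def occursAtZ (x : ℤ → A) (m : ℤ) (w : List A) : Prop :=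
  (List.ofFn fun i : Fin w.length => x (m + (i : ℕ))) = w

def FactorsZ (x : ℤ → A) : Set (List A) := {w | ∃ m : ℤ, occursAtZ x m w}

def RightRec (x : ℤ → A) : Prop :=
  ∀ w ∈ FactorsZ x, ∀ N : ℤ, ∃ m : ℤ, N ≤ m ∧ occursAtZ x m w

def LeftRec (x : ℤ → A) : Prop :=
  ∀ w ∈ FactorsZ x, ∀ N : ℤ, ∃ m : ℤ, m ≤ N ∧ occursAtZ x m w

def RecurrentZ (x : ℤ → A) : Prop := RightRec x ∧ LeftRec x

/-- The `F`-flipped order condition, with orders `rA` (arrival) and `rD` (departure):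
the departure order is reversed when the number of `F`-letters of `w` is odd. -/
def FlippedOC [DecidableEq A] (L : Set (List A)) (F : Finset A)
    (rA rD : A → A → Prop) : Prop :=
  ∀ w : List A, Bispecial L w → ∀ a b c d : A, a ≠ b → c ≠ d →
    a :: (w ++ [c]) ∈ L → b :: (w ++ [d]) ∈ L →
    (rA a b ↔ if Even (w.countP fun e => decide (e ∈ F)) then rD c d else rD d c)

/-- A generalized `F`-flipped interval exchange transformation. -/
structure GIET (A : Type*) (F : Finset A) where
  l : A → ℝ
  r : A → ℝ
  T : ℝ → ℝ
  lt : ∀ e, l e < r e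
  sub : ∀ e, Set.Ioo (l e) (r e) ⊆ Set.Ioo (0 : ℝ) 1
  disj : ∀ e f, e ≠ f → Disjoint (Set.Ioo (l e) (r e)) (Set.Ioo (l f) (r f))
  cover : Set.Icc (0 : ℝ) 1 = ⋃ e, Set.Icc (l e) (r e)
  cont : ∀ e, ContinuousOn T (Set.Ioo (l e) (r e))
  inc : ∀ e ∉ F, StrictMonoOn T (Set.Ioo (l e) (r e))
  dec : ∀ e ∈ F, StrictAntiOn T (Set.Ioo (l e) (r e))
  l' : A → ℝ
  r' : A → ℝ
  lt' : ∀ e, l' e < r' e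
  img : ∀ e, T '' Set.Ioo (l e) (r e) = Set.Ioo (l' e) (r' e)
  disj' : ∀ e f, e ≠ f → Disjoint (Set.Ioo (l' e) (r' e)) (Set.Ioo (l' f) (r' f))
  cover' : Set.Icc (0 : ℝ) 1 = ⋃ e, Set.Icc (l' e) (r' e)

variable {F : Finset A}

/-- A bi-infinite orbit of `G`, with symbolic itinerary `u`. -/
def GIET.IsOrbit (G : GIET A F) (u : ℤ → A) (p : ℤ → ℝ) : Prop :=
  (∀ n : ℤ, G.T (p n) = p (n + 1)) ∧
  ∀ n : ℤ, p n ∈ Set.Ioo (G.l (u n)) (G.r (u n))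

/-- The natural coding `L(T)`: the language generated by all trajectories. -/
def GIET.lang (G : GIET A F) : Set (List A) :=
  {w | ∃ (u : ℤ → A) (p : ℤ → ℝ), G.IsOrbit u p ∧
    ∃ m : ℤ, (List.ofFn fun i : Fin w.length => u (m + (i : ℕ))) = w}


/- ===== auxiliary development for stmt17 ===== -/

section Aux17
open MeasureTheory


/-- image of an open interval under an affine map -/
lemma aff_image_Ioo (m b u v : ℝ) (hm : m ≠ 0) :
    ∃ u' v', ((fun x => m * x + b) '' Set.Ioo u v = Set.Ioo u' v') ∧ v' - u' = |m| * (v - u) := by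
  rcases hm.lt_or_gt with h | h
  · refine ⟨m*v+b, m*u+b, ?_, by rw [abs_of_neg h]; ring⟩
    ext y
    simp only [Set.mem_image, Set.mem_Ioo]
    constructor
    · rintro ⟨x, ⟨h1, h2⟩, rfl⟩
      constructor <;> nlinarith
    · rintro ⟨h1, h2⟩
      refine ⟨(y - b)/m, ⟨?_, ?_⟩, by field_simp; ring⟩
      · rw [lt_div_iff_of_neg h]; nlinarith
      · rw [div_lt_iff_of_neg h]; nlinarith
  · refine ⟨m*u+b, m*v+b, ?_, by rw [abs_of_pos h]; ring⟩
    ext y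
    simp only [Set.mem_image, Set.mem_Ioo]
    constructor
    · rintro ⟨x, ⟨h1, h2⟩, rfl⟩
      constructor <;> nlinarith
    · rintro ⟨h1, h2⟩
      refine ⟨(y - b)/m, ⟨?_, ?_⟩, by field_simp; ring⟩
      · rw [lt_div_iff₀ h]; nlinarith
      · rw [div_lt_iff₀ h]; nlinarith

lemma aff_preimage_Ioo (m b p q : ℝ) (hm : m ≠ 0) :
    ∃ u v, ((fun x => m * x + b) ⁻¹' Set.Ioo p q = Set.Ioo u v) := by
  rcases hm.lt_or_gt with h | h
  · refine ⟨(q-b)/m, (p-b)/m, ?_⟩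
    ext x
    simp only [Set.mem_preimage, Set.mem_Ioo]
    rw [div_lt_iff_of_neg h, lt_div_iff_of_neg h]
    constructor <;> intro ⟨h1, h2⟩ <;> constructor <;> nlinarith
  · refine ⟨(p-b)/m, (q-b)/m, ?_⟩
    ext x
    simp only [Set.mem_preimage, Set.mem_Ioo]
    rw [div_lt_iff₀ h, lt_div_iff₀ h]
    constructor <;> intro ⟨h1, h2⟩ <;> constructor <;> nlinarith

/-- cut point: a nonempty open interval meeting but not contained in another
open interval contains one of the endpoints -/
lemma cut_point {α β p q : ℝ} (hne : (Set.Ioo α β ∩ Set.Ioo p q).Nonempty)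
    (hns : ¬ Set.Ioo α β ⊆ Set.Ioo p q) :
    p ∈ Set.Ioo α β ∨ q ∈ Set.Ioo α β := by
  obtain ⟨x, ⟨hx1, hx2⟩, hx3, hx4⟩ := hne
  rw [Set.not_subset] at hns
  obtain ⟨y, ⟨hy1, hy2⟩, hy⟩ := hns
  rw [Set.mem_Ioo, not_and_or, not_lt, not_lt] at hy
  rcases hy with hy | hy
  · exact Or.inl ⟨lt_of_lt_of_le hy1 hy, lt_trans hx3 hx2⟩
  · exact Or.inr ⟨lt_trans hx1 hx4, lt_of_le_of_lt hy hy2⟩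

/-- cancel iterates of a map injective on U along orbits staying in U -/
lemma iter_cancel {T : ℝ → ℝ} {U : Set ℝ} (hinj : Set.InjOn T U) :
    ∀ (k : ℕ) (x y : ℝ), (∀ i < k, T^[i] x ∈ U) → (∀ i < k, T^[i] y ∈ U) →
      T^[k] x = T^[k] y → x = y := by
  intro k
  induction k with
  | zero => intro x y _ _ h; simpa using h
  | succ n ih =>
    intro x y hx hy h
    rw [Function.iterate_succ_apply', Function.iterate_succ_apply'] at h
    have hxy : T^[n] x = T^[n] y :=
      hinj (hx n (Nat.lt_succ_self n)) (hy n (Nat.lt_succ_self n)) h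
    exact ih x y (fun i hi => hx i (hi.trans (Nat.lt_succ_self n)))
      (fun i hi => hy i (hi.trans (Nat.lt_succ_self n))) hxy

/-- sum of lengths of finitely many pairwise disjoint open subintervals of (0,1) -/
lemma sum_length_le_one (N : ℕ) (u v : ℕ → ℝ) (hlt : ∀ n < N, u n < v n)
    (hsub : ∀ n < N, Set.Ioo (u n) (v n) ⊆ Set.Ioo (0:ℝ) 1)
    (hdisj : ∀ m < N, ∀ n < N, m ≠ n → Set.Ioo (u m) (v m) ∩ Set.Ioo (u n) (v n) = ∅) :
    ∑ n ∈ Finset.range N, (v n - u n) ≤ 1 := by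
  have key : (∑ n ∈ Finset.range N, MeasureTheory.volume (Set.Ioo (u n) (v n)))
      = MeasureTheory.volume (⋃ n ∈ Finset.range N, Set.Ioo (u n) (v n)) := by
    rw [MeasureTheory.measure_biUnion_finset]
    · intro m hm n hn hmn
      simp only [Finset.mem_coe, Finset.mem_range] at hm hn
      exact Set.disjoint_iff_inter_eq_empty.mpr (hdisj m hm n hn hmn)
    · intro n _; exact measurableSet_Ioo
  have le1 : MeasureTheory.volume (⋃ n ∈ Finset.range N, Set.Ioo (u n) (v n))
      ≤ MeasureTheory.volume (Set.Ioo (0:ℝ) 1) := by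
    apply MeasureTheory.measure_mono
    exact Set.iUnion₂_subset fun n hn => hsub n (Finset.mem_range.mp hn)
  rw [Real.volume_Ioo] at le1
  have : ENNReal.ofReal (∑ n ∈ Finset.range N, (v n - u n)) ≤ ENNReal.ofReal (1 - 0) := by
    rw [ENNReal.ofReal_sum_of_nonneg (fun n hn => by
      have := hlt n (Finset.mem_range.mp hn); linarith)]
    calc (∑ n ∈ Finset.range N, ENNReal.ofReal (v n - u n))
        = ∑ n ∈ Finset.range N, MeasureTheory.volume (Set.Ioo (u n) (v n)) := by
          simp [Real.volume_Ioo]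
      _ ≤ ENNReal.ofReal (1 - 0) := key ▸ le1
  rw [ENNReal.ofReal_le_ofReal_iff (by norm_num)] at this
  linarith

lemma summable_exp_sum_step (f : ℤ → ℝ) (a : ℤ) :
    Summable (fun n : ℕ => Real.exp (∑ j ∈ Finset.range n, f (a + j))) ↔
    Summable (fun n : ℕ => Real.exp (∑ j ∈ Finset.range n, f ((a+1) + j))) := by
  have hrel : ∀ n : ℕ, Real.exp (∑ j ∈ Finset.range (n+1), f (a + j))
      = Real.exp (f a) * Real.exp (∑ j ∈ Finset.range n, f ((a+1) + j)) := by
    intro n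
    have e0 : a + ((0:ℕ):ℤ) = a := by push_cast; ring
    rw [Finset.sum_range_succ', Real.exp_add, mul_comm, e0]
    congr 2
    apply Finset.sum_congr rfl
    intro j _
    have : a + ((j+1 : ℕ):ℤ) = (a+1) + (j:ℤ) := by push_cast; ring
    rw [this]
  constructor
  · intro h
    have h1 : Summable (fun n : ℕ => Real.exp (∑ j ∈ Finset.range (n+1), f (a + j))) :=
      (summable_nat_add_iff (f := fun n : ℕ => Real.exp (∑ j ∈ Finset.range n, f (a + j))) 1).mpr h
    refine (h1.mul_left (Real.exp (-f a))).congr fun n => ?_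
    rw [hrel n, ← mul_assoc, ← Real.exp_add, neg_add_cancel, Real.exp_zero, one_mul]
  · intro h
    have h3 : Summable (fun n : ℕ => Real.exp (∑ j ∈ Finset.range (n+1), f (a + j))) :=
      (h.mul_left (Real.exp (f a))).congr fun n => (hrel n).symm
    exact (summable_nat_add_iff (f := fun n : ℕ => Real.exp (∑ j ∈ Finset.range n, f (a + j))) 1).mp h3

lemma summable_exp_sum_shift (f : ℤ → ℝ) (a b : ℤ)
    (h : Summable (fun n : ℕ => Real.exp (∑ j ∈ Finset.range n, f (a + j)))) :
    Summable (fun n : ℕ => Real.exp (∑ j ∈ Finset.range n, f (b + j))) := by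
  have all : ∀ d : ℤ, Summable (fun n : ℕ => Real.exp (∑ j ∈ Finset.range n, f ((a + d) + j))) := by
    intro d
    induction d using Int.induction_on with
    | zero => simpa using h
    | succ i ih =>
      have := (summable_exp_sum_step f (a + i)).mp ih
      have he : a + (i + 1 : ℤ) = (a + i) + 1 := by ring
      rwa [he]
    | pred i ih =>
      have he : (a + (-i : ℤ)) = (a + (-i - 1)) + 1 := by ring
      rw [he] at ih
      have := (summable_exp_sum_step f (a + (-i - 1))).mpr ih
      rwa [show a + (-(i:ℤ) - 1) = a + (-i-1) from rfl]
  have h2 := all (b - a)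
  have he : a + (b - a) = b := by ring
  rwa [he] at h2


namespace Stmt17aux

noncomputable def sl [DecidableEq A] (F : Finset A) (θ : A → ℝ) (e : A) : ℝ :=
  if e ∈ F then -Real.exp (θ e) else Real.exp (θ e)

lemma sl_ne_zero [DecidableEq A] (F : Finset A) (θ : A → ℝ) (e : A) : sl F θ e ≠ 0 := by
  unfold sl; split <;> simp [Real.exp_ne_zero, neg_ne_zero]

lemma abs_sl [DecidableEq A] (F : Finset A) (θ : A → ℝ) (e : A) : |sl F θ e| = Real.exp (θ e) := by
  unfold sl; split
  · rw [abs_neg, abs_of_pos (Real.exp_pos _)]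
  · rw [abs_of_pos (Real.exp_pos _)]

variable {F : Finset A} (G : GIET A F) (z : ℤ → A)

/-- the union of the defining intervals -/
def UU : Set ℝ := ⋃ e, Set.Ioo (G.l e) (G.r e)

/-- `x` follows the itinerary of `z` starting at `t` for `n` steps -/
def fol (x : ℝ) (t : ℤ) (n : ℕ) : Prop :=
  ∀ i : ℕ, i ≤ n → G.T^[i] x ∈ Set.Ioo (G.l (z (t + i))) (G.r (z (t + i)))

def cyl (t : ℤ) (n : ℕ) : Set ℝ := {x | fol G z x t n}

lemma letter_eq {x : ℝ} {e f : A} (hx : x ∈ Set.Ioo (G.l e) (G.r e))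
    (hy : x ∈ Set.Ioo (G.l f) (G.r f)) : e = f := by
  by_contra h
  exact Set.disjoint_left.mp (G.disj e f h) hx hy

lemma letter_eq' {x : ℝ} {e f : A} (hx : x ∈ Set.Ioo (G.l' e) (G.r' e))
    (hy : x ∈ Set.Ioo (G.l' f) (G.r' f)) : e = f := by
  by_contra h
  exact Set.disjoint_left.mp (G.disj' e f h) hx hy

lemma T_mem_I' {x : ℝ} {e : A} (hx : x ∈ Set.Ioo (G.l e) (G.r e)) :
    G.T x ∈ Set.Ioo (G.l' e) (G.r' e) := G.img e ▸ Set.mem_image_of_mem G.T hx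

lemma T_inj : Set.InjOn G.T (UU G) := by
  rintro x hx y hy hxy
  obtain ⟨e, he⟩ := Set.mem_iUnion.mp hx
  obtain ⟨f, hf⟩ := Set.mem_iUnion.mp hy
  have h1 : G.T x ∈ Set.Ioo (G.l' e) (G.r' e) := T_mem_I' G he
  have h2 : G.T y ∈ Set.Ioo (G.l' f) (G.r' f) := T_mem_I' G hf
  have hef : e = f := letter_eq' G h1 (hxy ▸ h2)
  subst hef
  by_cases heF : e ∈ F
  · exact (G.dec e heF).injOn he hf hxy
  · exact (G.inc e heF).injOn he hf hxy

lemma mem_UU {x : ℝ} {e : A} (hx : x ∈ Set.Ioo (G.l e) (G.r e)) : x ∈ UU G :=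
  Set.mem_iUnion.mpr ⟨e, hx⟩

lemma cyl_sub_U {x : ℝ} {t : ℤ} {n : ℕ} (hx : x ∈ cyl G z t n) :
    ∀ i : ℕ, i ≤ n → G.T^[i] x ∈ UU G := fun i hi => mem_UU G (hx i hi)

lemma cyl_mono {t : ℤ} {m n : ℕ} (h : m ≤ n) : cyl G z t n ⊆ cyl G z t m :=
  fun _ hx i hi => hx i (hi.trans h)

lemma cyl_nonempty (hz : z ∈ XL G.lang) (t : ℤ) (n : ℕ) : (cyl G z t n).Nonempty := by
  obtain ⟨u, p, horb, m, hm⟩ := hz t (n+1)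
  have hpt : ∀ i : ℕ, i ≤ n → u (m + i) = z (t + i) := by
    intro i hi
    have h4 := congrArg (fun l : List A => l[i]?) hm
    simp only [List.getElem?_ofFn, List.length_ofFn, List.ofFnNthVal] at h4
    rw [dif_pos (show i < n+1 by omega), dif_pos (show i < n+1 by omega)] at h4
    simpa using h4
  have hit : ∀ i : ℕ, G.T^[i] (p m) = p (m + i) := by
    intro i
    induction i with
    | zero => simp
    | succ k ih =>
      rw [Function.iterate_succ_apply', ih, horb.1 (m + k)]
      congr 1
      push_cast; ring
  refine ⟨p m, fun i hi => ?_⟩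
  rw [hit i, ← hpt i hi]
  exact horb.2 (m + i)

variable [DecidableEq A] (θ : A → ℝ) (c : A → ℝ)

lemma cyl_affine
    (hc : ∀ e, ∀ x ∈ Set.Ioo (G.l e) (G.r e), G.T x = sl F θ e * x + c e)
    (t : ℤ) (n : ℕ) :
    ∀ i : ℕ, i ≤ n + 1 → ∃ b : ℝ, ∀ x ∈ cyl G z t n,
      G.T^[i] x = (∏ j ∈ Finset.range i, sl F θ (z (t + j))) * x + b := by
  intro i
  induction i with
  | zero => exact fun _ => ⟨0, fun x _ => by simp⟩
  | succ k ih =>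
    intro hk
    obtain ⟨b, hb⟩ := ih (by omega)
    refine ⟨sl F θ (z (t + k)) * b + c (z (t + k)), fun x hx => ?_⟩
    have hmem : G.T^[k] x ∈ Set.Ioo (G.l (z (t + k))) (G.r (z (t + k))) := hx k (by omega)
    rw [Function.iterate_succ_apply', hc _ _ hmem, hb x hx, Finset.prod_range_succ]
    ring

lemma abs_prod_sl (t : ℤ) (i : ℕ) :
    |∏ j ∈ Finset.range i, sl F θ (z (t + j))| =
      Real.exp (∑ j ∈ Finset.range i, θ (z (t + j))) := by
  rw [Finset.abs_prod, Real.exp_sum]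
  exact Finset.prod_congr rfl fun j _ => abs_sl F θ _

lemma prod_sl_ne_zero (t : ℤ) (i : ℕ) :
    (∏ j ∈ Finset.range i, sl F θ (z (t + j))) ≠ 0 :=
  Finset.prod_ne_zero_iff.mpr fun j _ => sl_ne_zero F θ _

lemma cyl_Ioo (hz : z ∈ XL G.lang)
    (hc : ∀ e, ∀ x ∈ Set.Ioo (G.l e) (G.r e), G.T x = sl F θ e * x + c e)
    (t : ℤ) (n : ℕ) :
    ∃ α β : ℝ, α < β ∧ cyl G z t n = Set.Ioo α β := by
  induction n with
  | zero =>
    refine ⟨G.l (z t), G.r (z t), ?_, ?_⟩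
    · have h := G.lt (z t)
      simpa using h
    · ext x
      simp only [cyl, fol, Set.mem_setOf_eq, Set.mem_Ioo]
      constructor
      · intro h
        have := h 0 le_rfl
        simpa using this
      · intro h i hi
        interval_cases i
        simpa using h
  | succ n ih =>
    obtain ⟨α, β, hαβ, hC⟩ := ih
    obtain ⟨b, hb⟩ := cyl_affine G z θ c hc t n (n+1) le_rfl
    set m := ∏ j ∈ Finset.range (n+1), sl F θ (z (t + j)) with hm
    have hmne : m ≠ 0 := prod_sl_ne_zero (z := z) (θ := θ) t (n+1)
    have hset : cyl G z t (n+1) = cyl G z t n ∩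
        (fun x => m * x + b) ⁻¹' Set.Ioo (G.l (z (t + (n+1:ℕ)))) (G.r (z (t + (n+1:ℕ)))) := by
      ext x
      constructor
      · intro hx
        refine ⟨cyl_mono G z (Nat.le_succ n) hx, ?_⟩
        have h1 : G.T^[n+1] x ∈ Set.Ioo (G.l (z (t + (n+1:ℕ)))) (G.r (z (t + (n+1:ℕ)))) :=
          hx (n+1) le_rfl
        have h2 := hb x (cyl_mono G z (Nat.le_succ n) hx)
        simpa [Set.mem_preimage, ← h2] using h1
      · rintro ⟨h1, h2⟩ i hi
        rcases Nat.lt_or_ge i (n+1) with h | h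
        · exact h1 i (by omega)
        · have : i = n + 1 := by omega
          subst this
          have h3 := hb x h1
          rw [h3]
          exact h2
    obtain ⟨u', v', hpre⟩ := aff_preimage_Ioo m b _ _ hmne
    rw [hC, hpre, Set.Ioo_inter_Ioo] at hset
    have hne := cyl_nonempty G z hz t (n+1)
    rw [hset] at hne
    exact ⟨_, _, Set.nonempty_Ioo.mp hne, hset⟩

/-- image of the cylinder under the iterates, with its length -/
lemma cyl_image (hz : z ∈ XL G.lang)
    (hc : ∀ e, ∀ x ∈ Set.Ioo (G.l e) (G.r e), G.T x = sl F θ e * x + c e)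
    (t : ℤ) (n : ℕ) (i : ℕ) (hi : i ≤ n + 1) {α β : ℝ} (hC : cyl G z t n = Set.Ioo α β) :
    ∃ α' β', G.T^[i] '' cyl G z t n = Set.Ioo α' β' ∧
      β' - α' = Real.exp (∑ j ∈ Finset.range i, θ (z (t + j))) * (β - α) := by
  obtain ⟨b, hb⟩ := cyl_affine G z θ c hc t n i hi
  set m := ∏ j ∈ Finset.range i, sl F θ (z (t + j)) with hm
  have hmne : m ≠ 0 := prod_sl_ne_zero (z := z) (θ := θ) t i
  have himg : G.T^[i] '' cyl G z t n = (fun x => m * x + b) '' Set.Ioo α β := by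
    rw [← hC]
    exact Set.image_congr hb
  obtain ⟨α', β', h1, h2⟩ := aff_image_Ioo m b α β hmne
  refine ⟨α', β', by rw [himg, h1], ?_⟩
  rw [h2, abs_prod_sl]

/-- the one-step decomposition of a cylinder -/
lemma cyl_step (t : ℤ) (n : ℕ) :
    cyl G z t (n+1) = Set.Ioo (G.l (z t)) (G.r (z t)) ∩ G.T ⁻¹' (cyl G z (t+1) n) := by
  ext x
  simp only [cyl, fol, Set.mem_setOf_eq, Set.mem_inter_iff, Set.mem_preimage]
  constructor
  · intro h
    refine ⟨by simpa using h 0 (by omega), fun i hi => ?_⟩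
    have := h (i+1) (by omega)
    rw [Function.iterate_succ_apply] at this
    have he : t + ((i:ℕ)+1:ℕ) = t + 1 + i := by push_cast; ring
    rwa [he] at this
  · rintro ⟨h0, h⟩ i hi
    cases i with
    | zero => simpa using h0
    | succ k =>
      have := h k (by omega)
      rw [← Function.iterate_succ_apply G.T k x] at this
      have he : t + 1 + (k:ℕ) = t + ((k:ℕ)+1:ℕ) := by push_cast; ring
      rwa [he] at this

/-- Step A: forward stabilization of the cylinders at the last occurrence. -/
lemma stabF [Fintype A]
    (hc : ∀ e, ∀ x ∈ Set.Ioo (G.l e) (G.r e), G.T x = sl F θ e * x + c e)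
    (hz : z ∈ XL G.lang) (a : ℤ) (ℓ : ℕ)
    (hv : ∀ k : ℤ, 1 ≤ k → ∃ i : ℕ, i < ℓ ∧ z (a + k + i) ≠ z (a + i)) :
    ∃ b₁ : ℕ, ℓ ≤ b₁ ∧ ∀ b : ℕ, b₁ ≤ b → cyl G z a b = cyl G z a b₁ := by
  classical
  -- the shrinking set
  set Bad : Set ℕ := {b | ℓ ≤ b + 1 ∧ cyl G z a (b+1) ≠ cyl G z a b} with hBad
  -- a cut point for each shrinking index
  have hcut : ∀ b ∈ Bad, ∃ s : Bool,
      (cond s (G.l (z (a + (b+1:ℕ)))) (G.r (z (a + (b+1:ℕ))))) ∈ G.T^[b+1] '' cyl G z a b := by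
    intro b hb
    obtain ⟨hℓb, hne⟩ := hb
    -- some point of cyl a b fails the (b+1)-st constraint
    have hx : ∃ x ∈ cyl G z a b, G.T^[b+1] x ∉
        Set.Ioo (G.l (z (a + (b+1:ℕ)))) (G.r (z (a + (b+1:ℕ)))) := by
      by_contra hcon
      push_neg at hcon
      apply hne
      apply Set.Subset.antisymm (cyl_mono G z (Nat.le_succ b))
      intro x hxb i hi
      rcases Nat.lt_or_ge i (b+1) with h | h
      · exact hxb i (by omega)
      · have : i = b + 1 := by omega
        subst this
        exact hcon x hxb
    obtain ⟨x, hxc, hxout⟩ := hx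
    obtain ⟨α, β, hαβ, hC⟩ := cyl_Ioo G z θ c hz hc a b
    obtain ⟨α', β', hJ, _⟩ := cyl_image G z θ c hz hc a b (b+1) le_rfl hC
    have hnsub : ¬ G.T^[b+1] '' cyl G z a b ⊆
        Set.Ioo (G.l (z (a + (b+1:ℕ)))) (G.r (z (a + (b+1:ℕ)))) :=
      fun hsub => hxout (hsub (Set.mem_image_of_mem _ hxc))
    have hmeet : (G.T^[b+1] '' cyl G z a b ∩
        Set.Ioo (G.l (z (a + (b+1:ℕ)))) (G.r (z (a + (b+1:ℕ))))).Nonempty := by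
      obtain ⟨y, hy⟩ := cyl_nonempty G z hz a (b+1)
      exact ⟨G.T^[b+1] y, Set.mem_image_of_mem _ (cyl_mono G z (Nat.le_succ b) hy),
        hy (b+1) le_rfl⟩
    rw [hJ] at hnsub hmeet
    rcases cut_point hmeet hnsub with h | h
    · exact ⟨true, by rw [hJ]; exact h⟩
    · exact ⟨false, by rw [hJ]; exact h⟩
  -- no cut datum can repeat
  have hkey : ∀ b ∈ Bad, ∀ b' ∈ Bad, b < b' → ∀ y : ℝ,
      y ∈ G.T^[b+1] '' cyl G z a b → y ∈ G.T^[b'+1] '' cyl G z a b' → False := by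
    rintro b hb b' _ hbb' y ⟨x, hx, hxy⟩ ⟨x', hx', hxy'⟩
    obtain ⟨hℓb, -⟩ := hb
    have hiter : G.T^[b'+1] x' = G.T^[b+1] (G.T^[b'-b] x') := by
      rw [← Function.iterate_add_apply]
      congr 1
      omega
    have hcancel : x = G.T^[b'-b] x' := by
      apply iter_cancel (T_inj G) (b+1) x _
        (fun i hi => cyl_sub_U G z hx i (by omega))
        (fun i hi => by
          rw [← Function.iterate_add_apply]
          exact cyl_sub_U G z hx' (i + (b'-b)) (by omega))
      rw [hxy, ← hxy', hiter]
    obtain ⟨i, hiℓ, hne⟩ := hv ((b' - b : ℕ) : ℤ) (by omega)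
    have g1 : G.T^[i] x ∈ Set.Ioo (G.l (z (a + i))) (G.r (z (a + i))) :=
      hx i (by omega)
    have g2 : G.T^[i + (b'-b)] x' ∈ Set.Ioo (G.l (z (a + ((i + (b'-b) : ℕ) : ℤ))))
        (G.r (z (a + ((i + (b'-b) : ℕ) : ℤ)))) := hx' (i + (b'-b)) (by omega)
    have hpt : G.T^[i] x = G.T^[i + (b'-b)] x' := by
      rw [hcancel, ← Function.iterate_add_apply]
    rw [← hpt] at g2
    have hcast : a + ((i + (b'-b) : ℕ) : ℤ) = a + ((b'-b : ℕ) : ℤ) + (i : ℤ) := by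
      push_cast
      ring
    rw [hcast] at g2
    exact hne (letter_eq G g2 g1)
  -- hence `Bad` is finite
  have hfin : Bad.Finite := by
    set ψ : ℕ → A × Bool := fun b =>
      (z (a + (b+1:ℕ)), if h : b ∈ Bad then (hcut b h).choose else true) with hψ
    have hmem : ∀ b ∈ Bad, (cond (ψ b).2 (G.l (ψ b).1) (G.r (ψ b).1))
        ∈ G.T^[b+1] '' cyl G z a b := by
      intro b hb
      simp only [hψ]
      rw [dif_pos hb]
      exact (hcut b hb).choose_spec
    have hinj : Set.InjOn ψ Bad := by
      intro b hb b' hb' heq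
      by_contra hne
      rcases Nat.lt_or_ge b b' with h | h
      · apply hkey b hb b' hb' h _ (hmem b hb)
        rw [heq]
        exact hmem b' hb'
      · have h' : b' < b := by omega
        apply hkey b' hb' b hb h' _ (hmem b' hb')
        rw [← heq]
        exact hmem b hb
    exact Set.Finite.of_finite_image (Set.toFinite _) hinj
  obtain ⟨M, hM⟩ := hfin.bddAbove
  refine ⟨max (M+1) ℓ, le_max_right _ _, ?_⟩
  have hnoshrink : ∀ b : ℕ, max (M+1) ℓ ≤ b → cyl G z a (b+1) = cyl G z a b := by
    intro b hb
    by_contra hne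
    have : b ∈ Bad := ⟨by omega, hne⟩
    have := hM this
    omega
  intro b hb
  induction b with
  | zero => have : max (M+1) ℓ = 0 := by omega
            rw [Nat.le_zero.mp hb]
  | succ n ih =>
    rcases Nat.lt_or_ge n (max (M+1) ℓ) with h | h
    · have : max (M+1) ℓ = n + 1 := by omega
      rw [this]
    · rw [hnoshrink n h]
      exact ih h

/-- Step B: points of the extended cylinders follow `z` forever. -/
lemma wnFull
    (a : ℤ) (b₁ : ℕ)
    (hstab : ∀ b : ℕ, b₁ ≤ b → cyl G z a b = cyl G z a b₁) :
    ∀ (n : ℕ) (x : ℝ), x ∈ cyl G z (a - n) (n + b₁) →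
      ∀ i : ℕ, G.T^[i] x ∈ Set.Ioo (G.l (z (a - n + i))) (G.r (z (a - n + i))) := by
  intro n x hx i
  rcases le_or_gt i (n + b₁) with h | h
  · exact hx i h
  have hTn : G.T^[n] x ∈ cyl G z a b₁ := by
    intro j hj
    have h2 := hx (j + n) (by omega)
    rw [Function.iterate_add_apply] at h2
    have he : a - n + ((j + n : ℕ) : ℤ) = a + j := by push_cast; ring
    rwa [he] at h2
  have hx' : G.T^[n] x ∈ cyl G z a (max b₁ (i-n)) := by
    rw [hstab _ (le_max_left _ _)]
    exact hTn
  have h3 := hx' (i - n) (le_max_right _ _)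
  rw [← Function.iterate_add_apply] at h3
  have he2 : (i - n) + n = i := by omega
  rw [he2] at h3
  have he3 : a + ((i - n : ℕ) : ℤ) = a - n + i := by omega
  rwa [he3] at h3

/-- Step C: the leftward-extended cylinders are pairwise disjoint. -/
lemma wnDisj
    (a : ℤ) (b₁ : ℕ) (ℓ : ℕ)
    (hstab : ∀ b : ℕ, b₁ ≤ b → cyl G z a b = cyl G z a b₁)
    (hv : ∀ k : ℤ, 1 ≤ k → ∃ i : ℕ, i < ℓ ∧ z (a + k + i) ≠ z (a + i)) :
    ∀ (m k : ℕ) (x : ℝ), x ∈ cyl G z (a - m) (m + b₁) →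
      x ∈ cyl G z (a - (m+k+1:ℕ)) ((m+k+1) + b₁) → False := by
  intro m k x hxm hxn
  obtain ⟨i, hiℓ, hne⟩ := hv ((k+1 : ℕ) : ℤ) (by omega)
  have g1 := wnFull G z a b₁ hstab m x hxm (m+k+1+i)
  have g2 := wnFull G z a b₁ hstab (m+k+1) x hxn (m+k+1+i)
  have e1 : a - (m : ℕ) + ((m+k+1+i : ℕ) : ℤ) = a + ((k+1:ℕ):ℤ) + i := by push_cast; ring
  have e2 : a - ((m+k+1 : ℕ):ℤ) + ((m+k+1+i : ℕ) : ℤ) = a + i := by push_cast; ring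
  rw [e1] at g1
  rw [e2] at g2
  exact hne (letter_eq G g1 g2)

/-- Step D: convergence of the forward series. -/
lemma forwardSummable [Fintype A]
    (hc : ∀ e, ∀ x ∈ Set.Ioo (G.l e) (G.r e), G.T x = sl F θ e * x + c e)
    (hz : z ∈ XL G.lang) (a : ℤ) (ℓ : ℕ)
    (hv : ∀ k : ℤ, 1 ≤ k → ∃ i : ℕ, i < ℓ ∧ z (a + k + i) ≠ z (a + i)) :
    Summable (fun n : ℕ => Real.exp (∑ j ∈ Finset.range n, θ (z (a + j)))) := by
  obtain ⟨b₁, hℓb₁, hstab⟩ := stabF G z θ c hc hz a ℓ hv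
  obtain ⟨α, β, hαβ, hW⟩ := cyl_Ioo G z θ c hz hc a b₁
  have Wfull : ∀ x ∈ cyl G z a b₁, ∀ i : ℕ,
      G.T^[i] x ∈ Set.Ioo (G.l (z (a + i))) (G.r (z (a + i))) := by
    intro x hx i
    have h0 : x ∈ cyl G z (a - ((0:ℕ):ℤ)) (0 + b₁) := by
      rw [show ((0:ℕ)+b₁ : ℕ) = b₁ from by omega, show a - ((0:ℕ):ℤ) = a from by push_cast; ring]
      exact hx
    have h1 := wnFull G z a b₁ hstab 0 x h0 i
    rwa [show a - ((0:ℕ):ℤ) + i = a + i from by push_cast; ring] at h1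
  have hD : ∀ n : ℕ, ∃ p : ℝ × ℝ, G.T^[n] '' cyl G z a b₁ = Set.Ioo p.1 p.2 ∧
      p.2 - p.1 = Real.exp (∑ j ∈ Finset.range n, θ (z (a + j))) * (β - α) := by
    intro n
    have hC : cyl G z a (max b₁ n) = Set.Ioo α β := by
      rw [hstab _ (le_max_left _ _)]; exact hW
    obtain ⟨p1, p2, h1, h2⟩ := cyl_image G z θ c hz hc a (max b₁ n) n
      ((le_max_right _ _).trans (Nat.le_succ _)) hC
    rw [hstab _ (le_max_left _ _)] at h1
    exact ⟨(p1, p2), h1, h2⟩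
  choose P hP1 hP2 using hD
  have hdisj : ∀ m n : ℕ, m < n →
      (G.T^[m] '' cyl G z a b₁) ∩ (G.T^[n] '' cyl G z a b₁) = ∅ := by
    intro m n hmn
    rw [Set.eq_empty_iff_forall_notMem]
    rintro y ⟨⟨x1, hx1, h1⟩, ⟨x2, hx2, h2⟩⟩
    have hiter : G.T^[n] x2 = G.T^[m] (G.T^[n-m] x2) := by
      rw [← Function.iterate_add_apply]; congr 1; omega
    have hcancel : x1 = G.T^[n-m] x2 := by
      apply iter_cancel (T_inj G) m x1 _
        (fun i _ => mem_UU G (Wfull x1 hx1 i))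
        (fun i _ => by rw [← Function.iterate_add_apply]; exact mem_UU G (Wfull x2 hx2 _))
      rw [h1, ← h2, hiter]
    obtain ⟨i, hiℓ, hne⟩ := hv ((n - m : ℕ) : ℤ) (by omega)
    have g1 := Wfull x1 hx1 i
    have g2 := Wfull x2 hx2 (i + (n-m))
    have hpt : G.T^[i] x1 = G.T^[i + (n-m)] x2 := by
      rw [hcancel, ← Function.iterate_add_apply]
    rw [← hpt] at g2
    have hcast : a + ((i + (n-m) : ℕ) : ℤ) = a + ((n-m : ℕ) : ℤ) + (i : ℤ) := by
      push_cast; ring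
    rw [hcast] at g2
    exact hne (letter_eq G g2 g1)
  have hWne : (cyl G z a b₁).Nonempty := cyl_nonempty G z hz a b₁
  have hlt : ∀ n : ℕ, (P n).1 < (P n).2 := by
    intro n
    apply Set.nonempty_Ioo.mp
    rw [← hP1 n]
    exact hWne.image _
  have hsub : ∀ n : ℕ, Set.Ioo (P n).1 (P n).2 ⊆ Set.Ioo (0:ℝ) 1 := by
    intro n y hy
    rw [← hP1 n] at hy
    obtain ⟨x, hx, rfl⟩ := hy
    exact G.sub _ (Wfull x hx n)
  have hbound : ∀ N : ℕ, ∑ n ∈ Finset.range N,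
      Real.exp (∑ j ∈ Finset.range n, θ (z (a + j))) ≤ 1 / (β - α) := by
    intro N
    have hsum := sum_length_le_one N (fun n => (P n).1) (fun n => (P n).2)
      (fun n _ => hlt n) (fun n _ => hsub n)
      (fun m hm n hn hmn => by
        rcases Nat.lt_or_ge m n with h | h
        · rw [← hP1 m, ← hP1 n]; exact hdisj m n h
        · have h' : n < m := by omega
          rw [← hP1 m, ← hP1 n, Set.inter_comm]; exact hdisj n m h')
    have hexp : (∑ n ∈ Finset.range N, ((P n).2 - (P n).1))
        = (∑ n ∈ Finset.range N, Real.exp (∑ j ∈ Finset.range n, θ (z (a + j)))) * (β - α) := by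
      rw [Finset.sum_mul]
      exact Finset.sum_congr rfl fun n _ => hP2 n
    rw [hexp] at hsum
    rw [le_div_iff₀ (by linarith)]
    exact hsum
  exact summable_of_sum_range_le (fun n => (Real.exp_pos _).le) hbound

/-- Step E: convergence of the backward series. -/
lemma backwardSummable [Fintype A]
    (hc : ∀ e, ∀ x ∈ Set.Ioo (G.l e) (G.r e), G.T x = sl F θ e * x + c e)
    (hz : z ∈ XL G.lang) (a : ℤ) (ℓ : ℕ)
    (hv : ∀ k : ℤ, 1 ≤ k → ∃ i : ℕ, i < ℓ ∧ z (a + k + i) ≠ z (a + i)) :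
    Summable (fun n : ℕ => Real.exp (-∑ j ∈ Finset.range n, θ (z (a - 1 - j)))) := by
  classical
  obtain ⟨b₁, hℓb₁, hstab⟩ := stabF G z θ c hc hz a ℓ hv
  have hWIoo : ∀ n : ℕ, ∃ p : ℝ × ℝ, p.1 < p.2 ∧
      cyl G z (a - n) (n + b₁) = Set.Ioo p.1 p.2 := by
    intro n
    obtain ⟨γ, δ, h1, h2⟩ := cyl_Ioo G z θ c hz hc (a - n) (n + b₁)
    exact ⟨(γ, δ), h1, h2⟩
  choose Q hQlt hQeq using hWIoo
  have hVIoo : ∀ n : ℕ, ∃ p : ℝ × ℝ,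
      G.T^[n] '' cyl G z (a - n) (n + b₁) = Set.Ioo p.1 p.2 ∧
      p.2 - p.1 = Real.exp (∑ j ∈ Finset.range n, θ (z (a - n + j))) * ((Q n).2 - (Q n).1) := by
    intro n
    obtain ⟨p1, p2, h1, h2⟩ := cyl_image G z θ c hz hc (a - n) (n + b₁) n (by omega) (hQeq n)
    exact ⟨(p1, p2), h1, h2⟩
  choose R hR1 hR2 using hVIoo
  have hVlt : ∀ n, (R n).1 < (R n).2 := by
    intro n
    apply Set.nonempty_Ioo.mp
    rw [← hR1 n]
    exact (cyl_nonempty G z hz _ _).image _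
  have hWstepAll : ∀ n : ℕ, cyl G z (a - (n+1:ℕ)) ((n+1) + b₁)
      = Set.Ioo (G.l (z (a - (n+1:ℕ)))) (G.r (z (a - (n+1:ℕ))))
        ∩ G.T ⁻¹' cyl G z (a - n) (n + b₁) := by
    intro n
    have h1 := cyl_step G z (a - ((n+1:ℕ):ℤ)) (n + b₁)
    rw [show a - ((n+1:ℕ):ℤ) + 1 = a - n from by push_cast; ring] at h1
    rw [show ((n+1) + b₁ : ℕ) = (n + b₁) + 1 from by omega]
    exact h1
  have hstep : ∀ n : ℕ, G.T^[n+1] '' cyl G z (a - (n+1:ℕ)) ((n+1) + b₁)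
      = G.T^[n] '' (Set.Ioo (G.l' (z (a - (n+1:ℕ)))) (G.r' (z (a - (n+1:ℕ))))
        ∩ cyl G z (a - n) (n + b₁)) := by
    intro n
    rw [Function.iterate_succ, Set.image_comp]
    congr 1
    rw [hWstepAll n, Set.image_inter_preimage, G.img]
  have hnoshrink : ∀ n : ℕ,
      cyl G z (a - n) (n + b₁) ⊆
        Set.Ioo (G.l' (z (a - (n+1:ℕ)))) (G.r' (z (a - (n+1:ℕ)))) →
      G.T^[n+1] '' cyl G z (a - (n+1:ℕ)) ((n+1) + b₁)
        = G.T^[n] '' cyl G z (a - n) (n + b₁) := by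
    intro n hsubI
    rw [hstep n, Set.inter_eq_self_of_subset_right hsubI]
  set BadB : Set ℕ := {n | ¬ cyl G z (a - n) (n + b₁) ⊆
      Set.Ioo (G.l' (z (a - (n+1:ℕ)))) (G.r' (z (a - (n+1:ℕ))))} with hBadB
  have hcutB : ∀ n ∈ BadB, ∃ s : Bool,
      (cond s (G.l' (z (a - (n+1:ℕ)))) (G.r' (z (a - (n+1:ℕ)))))
        ∈ cyl G z (a - n) (n + b₁) := by
    intro n hn
    have hmeet : (cyl G z (a - n) (n + b₁) ∩
        Set.Ioo (G.l' (z (a - (n+1:ℕ)))) (G.r' (z (a - (n+1:ℕ))))).Nonempty := by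
      obtain ⟨y, hy⟩ := cyl_nonempty G z hz (a - ((n+1:ℕ):ℤ)) ((n+1) + b₁)
      rw [hWstepAll n] at hy
      exact ⟨G.T y, hy.2, T_mem_I' G hy.1⟩
    have hn' : ¬ cyl G z (a - n) (n + b₁) ⊆
        Set.Ioo (G.l' (z (a - (n+1:ℕ)))) (G.r' (z (a - (n+1:ℕ)))) := hn
    rw [hQeq n] at hmeet hn'
    rcases cut_point hmeet hn' with h | h
    · exact ⟨true, by rw [hQeq n]; exact h⟩
    · exact ⟨false, by rw [hQeq n]; exact h⟩
  have hfinB : BadB.Finite := by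
    set ψ : ℕ → A × Bool := fun n =>
      (z (a - (n+1:ℕ)), if h : n ∈ BadB then (hcutB n h).choose else true) with hψ
    have hmemB : ∀ n ∈ BadB, (cond (ψ n).2 (G.l' (ψ n).1) (G.r' (ψ n).1))
        ∈ cyl G z (a - n) (n + b₁) := by
      intro n hn
      simp only [hψ]
      rw [dif_pos hn]
      exact (hcutB n hn).choose_spec
    have hinjB : Set.InjOn ψ BadB := by
      intro m hm n hn heq
      by_contra hne
      rcases Nat.lt_or_ge m n with h | h
      · obtain ⟨k, rfl⟩ : ∃ k, n = m + k + 1 := ⟨n - m - 1, by omega⟩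
        apply wnDisj G z a b₁ ℓ hstab hv m k _ (hmemB m hm)
        rw [heq]
        exact hmemB _ hn
      · have h' : n < m := by omega
        obtain ⟨k, rfl⟩ : ∃ k, m = n + k + 1 := ⟨m - n - 1, by omega⟩
        apply wnDisj G z a b₁ ℓ hstab hv n k _ (hmemB n hn)
        rw [← heq]
        exact hmemB _ hm
    exact Set.Finite.of_finite_image (Set.toFinite _) hinjB
  obtain ⟨M, hM⟩ := hfinB.bddAbove
  set n₀ : ℕ := M + 1 with hn₀
  have hVconst : ∀ n : ℕ, n₀ ≤ n → G.T^[n] '' cyl G z (a - n) (n + b₁)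
      = G.T^[n₀] '' cyl G z (a - n₀) (n₀ + b₁) := by
    intro n hn
    induction n with
    | zero => rw [Nat.le_zero.mp hn]
    | succ m ih =>
      rcases Nat.lt_or_ge m n₀ with h | h
      · have he : n₀ = m + 1 := by omega
        rw [he]
      · rw [← ih h]
        apply hnoshrink
        by_contra hbad
        have hmem : m ∈ BadB := hbad
        have := hM hmem
        omega
  have hVlen : ∀ n : ℕ, n₀ ≤ n → (R n).2 - (R n).1 = (R n₀).2 - (R n₀).1 := by
    intro n hn
    have h1 : Set.Ioo (R n).1 (R n).2 = Set.Ioo (R n₀).1 (R n₀).2 := by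
      rw [← hR1 n, ← hR1 n₀, hVconst n hn]
    have h2 := congrArg MeasureTheory.volume h1
    rw [Real.volume_Ioo, Real.volume_Ioo] at h2
    have h3 := (ENNReal.ofReal_eq_ofReal_iff
      (by linarith [hVlt n]) (by linarith [hVlt n₀])).mp h2
    linarith
  set δ0 : ℝ := (R n₀).2 - (R n₀).1 with hδ0
  have hδ0pos : 0 < δ0 := sub_pos.mpr (hVlt n₀)
  have hQlen : ∀ n : ℕ, n₀ ≤ n →
      Real.exp (-∑ j ∈ Finset.range n, θ (z (a - n + j))) * δ0 = (Q n).2 - (Q n).1 := by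
    intro n hn
    have h4 : δ0 = Real.exp (∑ j ∈ Finset.range n, θ (z (a - n + j))) * ((Q n).2 - (Q n).1) := by
      rw [← hVlen n hn]
      exact hR2 n
    rw [h4, ← mul_assoc, ← Real.exp_add, neg_add_cancel, Real.exp_zero, one_mul]
  have hQsub : ∀ n, Set.Ioo (Q n).1 (Q n).2 ⊆ Set.Ioo (0:ℝ) 1 := by
    intro n x hx
    rw [← hQeq n] at hx
    have h0 := hx 0 (by omega)
    rw [show a - (n:ℕ) + ((0:ℕ):ℤ) = a - n from by push_cast; ring] at h0
    exact G.sub _ h0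
  have hbound : ∀ N : ℕ, ∑ k ∈ Finset.range N,
      Real.exp (-∑ j ∈ Finset.range (k + n₀), θ (z (a - (k+n₀ : ℕ) + j))) ≤ 1 / δ0 := by
    intro N
    have hsum := sum_length_le_one N (fun k => (Q (k+n₀)).1) (fun k => (Q (k+n₀)).2)
      (fun k _ => hQlt _) (fun k _ => hQsub _)
      (fun m hm n hn hmn => by
        rw [Set.eq_empty_iff_forall_notMem]
        rintro x ⟨hx1, hx2⟩
        rw [← hQeq _] at hx1 hx2
        rcases Nat.lt_or_ge m n with h | h
        · obtain ⟨k, hk⟩ : ∃ k, n + n₀ = (m+n₀) + k + 1 := ⟨n - m - 1, by omega⟩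
          rw [hk] at hx2
          exact wnDisj G z a b₁ ℓ hstab hv (m+n₀) k x hx1 hx2
        · have h' : n < m := by omega
          obtain ⟨k, hk⟩ : ∃ k, m + n₀ = (n+n₀) + k + 1 := ⟨m - n - 1, by omega⟩
          rw [hk] at hx1
          exact wnDisj G z a b₁ ℓ hstab hv (n+n₀) k x hx2 hx1)
    have hexp : (∑ k ∈ Finset.range N, ((Q (k+n₀)).2 - (Q (k+n₀)).1))
        = (∑ k ∈ Finset.range N,
            Real.exp (-∑ j ∈ Finset.range (k+n₀), θ (z (a - (k+n₀:ℕ) + j)))) * δ0 := by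
      rw [Finset.sum_mul]
      exact Finset.sum_congr rfl fun k _ => (hQlen (k+n₀) (by omega)).symm
    rw [hexp] at hsum
    rw [le_div_iff₀ hδ0pos]
    exact hsum
  have hsummShift : Summable (fun k : ℕ =>
      Real.exp (-∑ j ∈ Finset.range (k+n₀), θ (z (a - (k+n₀:ℕ) + j)))) :=
    summable_of_sum_range_le (fun n => (Real.exp_pos _).le) hbound
  have hre : ∀ n : ℕ, (∑ j ∈ Finset.range n, θ (z (a - n + j)))
      = ∑ j ∈ Finset.range n, θ (z (a - 1 - j)) := by
    intro n
    rw [← Finset.sum_range_reflect]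
    apply Finset.sum_congr rfl
    intro j hj
    have hj' := Finset.mem_range.mp hj
    have he : a - (n:ℕ) + ((n-1-j : ℕ):ℤ) = a - 1 - j := by omega
    rw [he]
  have h5 : Summable (fun k : ℕ =>
      Real.exp (-∑ j ∈ Finset.range (k+n₀), θ (z (a - 1 - j)))) := by
    refine hsummShift.congr fun k => ?_
    rw [hre (k+n₀)]
  exact (summable_nat_add_iff
    (f := fun n : ℕ => Real.exp (-∑ j ∈ Finset.range n, θ (z (a - 1 - j)))) n₀).mp h5

/-- The core lemma: a sequence of `X_{L(T)}` with a factor occurring at `a`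
but never occurring to the right of `a` has both series convergent. -/
lemma core [Fintype A]
    (hc : ∀ e, ∀ x ∈ Set.Ioo (G.l e) (G.r e), G.T x = sl F θ e * x + c e)
    (hz : z ∈ XL G.lang) (a : ℤ) (ℓ : ℕ)
    (hv : ∀ k : ℤ, 1 ≤ k → ∃ i : ℕ, i < ℓ ∧ z (a + k + i) ≠ z (a + i)) :
    Summable (fun n : ℕ => Real.exp (∑ j ∈ Finset.range (n + 1), θ (z j))) ∧
    Summable (fun n : ℕ => Real.exp (-∑ j ∈ Finset.range (n + 1), θ (z (-(j:ℤ) - 1)))) := by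
  constructor
  · have s1 := forwardSummable G z θ c hc hz a ℓ hv
    have s2 : Summable (fun n : ℕ =>
        Real.exp (∑ j ∈ Finset.range n, (fun t : ℤ => θ (z t)) (a + j))) := s1
    have s3 := summable_exp_sum_shift (fun t : ℤ => θ (z t)) a 0 s2
    have s4 := (summable_nat_add_iff (f := fun n : ℕ =>
      Real.exp (∑ j ∈ Finset.range n, (fun t : ℤ => θ (z t)) (0 + (j:ℤ)))) 1).mpr s3
    refine s4.congr fun n => ?_
    congr 1
    apply Finset.sum_congr rfl
    intro j _
    simp
  · have s1 := backwardSummable G z θ c hc hz a ℓ hv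
    have s2 : Summable (fun n : ℕ =>
        Real.exp (∑ j ∈ Finset.range n, (fun t : ℤ => -θ (z (-1-t))) ((-a) + j))) := by
      refine s1.congr fun n => ?_
      congr 1
      rw [Finset.sum_neg_distrib]
      congr 1
      apply Finset.sum_congr rfl
      intro j _
      have he : a - 1 - (j:ℤ) = -1 - ((-a) + j) := by ring
      rw [he]
    have s3 := summable_exp_sum_shift (fun t : ℤ => -θ (z (-1-t))) (-a) 0 s2
    have s4 := (summable_nat_add_iff (f := fun n : ℕ =>
      Real.exp (∑ j ∈ Finset.range n, (fun t : ℤ => -θ (z (-1-t))) (0 + (j:ℤ)))) 1).mpr s3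
    refine s4.congr fun n => ?_
    congr 1
    rw [← Finset.sum_neg_distrib]
    apply Finset.sum_congr rfl
    intro j _
    have he : -1 - ((0:ℤ) + j) = -(j:ℤ) - 1 := by ring
    simp only []
    rw [he]

/-- index congruence for list getElem -/
lemma getElem_idx {l : List A} {i j : ℕ} (hj : j < l.length) (hij : i = j) :
    l[i]'(hij ▸ hj) = l[j]'hj := by subst hij; rfl

/-- pointwise characterization of occurrences -/
lemma occurs_iff (x : ℤ → A) (m : ℤ) (w : List A) :
    occursAtZ x m w ↔ ∀ (i : ℕ) (hi : i < w.length), x (m + i) = w[i]'hi := by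
  unfold occursAtZ
  constructor
  · intro h i hi
    have h2 := congrArg (fun l : List A => l[i]?) h
    simp only [List.getElem?_ofFn, List.length_ofFn, List.ofFnNthVal] at h2
    rw [dif_pos hi, List.getElem?_eq_getElem hi] at h2
    simpa using h2
  · intro h
    apply List.ext_getElem (by simp)
    intro i h1 h2
    simp only [List.getElem_ofFn]
    exact h i h2

/-- extraction of a "last occurrence" from failure of right recurrence -/
lemma extract_right (z : ℤ → A) (h : ¬ RightRec z) :
    ∃ (a : ℤ) (ℓ : ℕ), ∀ k : ℤ, 1 ≤ k → ∃ i : ℕ, i < ℓ ∧ z (a + k + i) ≠ z (a + i) := by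
  unfold RightRec at h
  push_neg at h
  obtain ⟨w, hwF, N, hN⟩ := h
  obtain ⟨m₁, hm₁⟩ := hwF
  have hbdd : ∀ m : ℤ, occursAtZ z m w → m ≤ N := by
    intro m hm
    by_contra hcon
    push_neg at hcon
    exact hN m hcon.le hm
  obtain ⟨a, haocc, hamax⟩ :=
    Int.exists_greatest_of_bdd (P := fun m => occursAtZ z m w) ⟨N, hbdd⟩ ⟨m₁, hm₁⟩
  refine ⟨a, w.length, ?_⟩
  intro k hk
  by_contra hcon
  push_neg at hcon
  have hocc : occursAtZ z (a + k) w := by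
    rw [occurs_iff] at haocc ⊢
    intro i hi
    rw [hcon i hi]
    exact haocc i hi
  have := hamax _ hocc
  omega

/-- failure of left recurrence gives failure of right recurrence of the reversal -/
lemma notRightRec_rev (z : ℤ → A) (h : ¬ LeftRec z) :
    ¬ RightRec (fun t : ℤ => z (-1 - t)) := by
  unfold LeftRec at h
  push_neg at h
  obtain ⟨w, hwF, N, hN⟩ := h
  obtain ⟨m₁, hm₁⟩ := hwF
  intro hR
  have hocc_rev : ∀ (m : ℤ), occursAtZ (fun t : ℤ => z (-1 - t)) m w.reverse ↔
      occursAtZ z (-m - w.length) w := by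
    intro m
    rw [occurs_iff, occurs_iff]
    constructor
    · intro hh i hi
      have hrl : w.length - 1 - i < w.reverse.length := by simp; omega
      have h2 := hh (w.length - 1 - i) hrl
      rw [List.getElem_reverse] at h2
      have h3 : w[w.length - 1 - (w.length - 1 - i)]'(by omega) = w[i]'hi :=
        getElem_idx hi (by omega)
      have e3 : (-m - w.length : ℤ) + (i:ℕ) = -1 - (m + ((w.length - 1 - i : ℕ) : ℤ)) := by
        omega
      rw [e3]
      show z _ = _
      rw [h2]
      exact h3
    · intro hh i hi
      have hi' : i < w.length := by simpa using hi
      have h2 := hh (w.length - 1 - i) (by omega)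
      have e3 : (-1 : ℤ) - (m + (i:ℕ)) = (-m - w.length) + ((w.length - 1 - i : ℕ) : ℤ) := by
        omega
      show z (-1 - (m + (i:ℕ))) = _
      rw [e3, h2, List.getElem_reverse]
  have hfac : w.reverse ∈ FactorsZ (fun t : ℤ => z (-1 - t)) := by
    refine ⟨-m₁ - w.length, (hocc_rev _).mpr ?_⟩
    have e : (-(-m₁ - (w.length:ℤ)) - w.length : ℤ) = m₁ := by ring
    rw [e]
    exact hm₁
  obtain ⟨m, hm, hoc⟩ := hR w.reverse hfac (-N - w.length)
  have hocz := (hocc_rev m).mp hoc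
  exact hN (-m - w.length) (by omega) hocz

/-! ### the reversed system -/

noncomputable def Tinv : ℝ → ℝ := Function.invFunOn G.T (UU G)

lemma Tinv_spec {x : ℝ} {e : A} (hx : x ∈ Set.Ioo (G.l e) (G.r e)) :
    Tinv G (G.T x) = x := by
  have h1 : G.T (Tinv G (G.T x)) = G.T x :=
    Function.invFunOn_eq (f := G.T) (s := UU G) ⟨x, mem_UU G hx, rfl⟩
  have h2 : Tinv G (G.T x) ∈ UU G :=
    Function.invFunOn_mem (f := G.T) (s := UU G) ⟨x, mem_UU G hx, rfl⟩
  exact T_inj G h2 (mem_UU G hx) h1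

lemma Tinv_mem {y : ℝ} {e : A} (hy : y ∈ Set.Ioo (G.l' e) (G.r' e)) :
    Tinv G y ∈ Set.Ioo (G.l e) (G.r e) ∧ G.T (Tinv G y) = y := by
  have h : y ∈ G.T '' Set.Ioo (G.l e) (G.r e) := by rw [G.img]; exact hy
  obtain ⟨x, hx, rfl⟩ := h
  rw [Tinv_spec G hx]
  exact ⟨hx, rfl⟩

lemma sl_neg (e : A) : sl F (fun f => -θ f) e = 1 / sl F θ e := by
  unfold sl
  split
  · rw [Real.exp_neg]
    field_simp
  · rw [Real.exp_neg, one_div]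

lemma Tinv_affine
    (hc : ∀ e, ∀ x ∈ Set.Ioo (G.l e) (G.r e), G.T x = sl F θ e * x + c e)
    {e : A} {y : ℝ} (hy : y ∈ Set.Ioo (G.l' e) (G.r' e)) :
    Tinv G y = sl F (fun f => -θ f) e * y + (-(c e) * sl F (fun f => -θ f) e) := by
  obtain ⟨hmem, hTy⟩ := Tinv_mem G hy
  have h1 := hc e _ hmem
  rw [hTy] at h1
  have hsl := sl_ne_zero F θ e
  have h2 : Tinv G y = (y - c e) * (1 / sl F θ e) := by
    field_simp
    linarith [h1]
  rw [h2, sl_neg θ e]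
  ring

/-- the reversed interval exchange transformation -/
noncomputable def revG
    (hc : ∀ e, ∀ x ∈ Set.Ioo (G.l e) (G.r e), G.T x = sl F θ e * x + c e) :
    GIET A F where
  l := G.l'
  r := G.r'
  T := Tinv G
  lt := G.lt'
  sub := by
    intro e x hx
    have hsub : Set.Icc (G.l' e) (G.r' e) ⊆ Set.Icc (0:ℝ) 1 := by
      rw [G.cover']
      exact Set.subset_iUnion (fun f => Set.Icc (G.l' f) (G.r' f)) e
    have h0 : (0:ℝ) ≤ G.l' e := (hsub (Set.left_mem_Icc.mpr (G.lt' e).le)).1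
    have h1 : G.r' e ≤ 1 := (hsub (Set.right_mem_Icc.mpr (G.lt' e).le)).2
    exact ⟨lt_of_le_of_lt h0 hx.1, lt_of_lt_of_le hx.2 h1⟩
  disj := G.disj'
  cover := G.cover'
  cont := by
    intro e
    apply ContinuousOn.congr
      (f := fun y : ℝ => sl F (fun f => -θ f) e * y + (-(c e) * sl F (fun f => -θ f) e))
    · exact ((continuous_const.mul continuous_id).add continuous_const).continuousOn
    · intro y hy
      exact Tinv_affine G θ c hc hy
  inc := by
    intro e he x hx y hy hxy
    rw [Tinv_affine G θ c hc hx, Tinv_affine G θ c hc hy]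
    have hpos : 0 < sl F (fun f => -θ f) e := by
      unfold sl
      rw [if_neg he]
      exact Real.exp_pos _
    nlinarith
  dec := by
    intro e he x hx y hy hxy
    rw [Tinv_affine G θ c hc hx, Tinv_affine G θ c hc hy]
    have hneg : sl F (fun f => -θ f) e < 0 := by
      unfold sl
      rw [if_pos he]
      have := Real.exp_pos (-θ e)
      linarith
    nlinarith
  l' := G.l
  r' := G.r
  lt' := G.lt
  img := by
    intro e
    apply Set.Subset.antisymm
    · rintro y ⟨w', hw', rfl⟩
      exact (Tinv_mem G hw').1
    · intro x hx
      exact ⟨G.T x, T_mem_I' G hx, Tinv_spec G hx⟩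
  disj' := G.disj
  cover' := G.cover

lemma revG_orbit
    (hc : ∀ e, ∀ x ∈ Set.Ioo (G.l e) (G.r e), G.T x = sl F θ e * x + c e)
    (u : ℤ → A) (p : ℤ → ℝ) (h : G.IsOrbit u p) :
    (revG G θ c hc).IsOrbit (fun n => u (-1 - n)) (fun n => p (-n)) := by
  have hp : ∀ n : ℤ, p (-n) = G.T (p (-n-1)) := by
    intro n
    rw [h.1 (-n-1)]
    congr 1
    ring
  constructor
  · intro n
    show Tinv G (p (-n)) = p (-(n+1))
    rw [hp n, Tinv_spec G (h.2 (-n-1))]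
    congr 1
    ring
  · intro n
    show p (-n) ∈ Set.Ioo (G.l' (u (-1-n))) (G.r' (u (-1-n)))
    rw [hp n]
    apply T_mem_I' G
    have h2 := h.2 (-n-1)
    have e : u (-n-1) = u (-1-n) := by congr 1; ring
    rw [e] at h2
    exact h2

lemma revG_XL
    (hc : ∀ e, ∀ x ∈ Set.Ioo (G.l e) (G.r e), G.T x = sl F θ e * x + c e)
    (hz : z ∈ XL G.lang) :
    (fun t : ℤ => z (-1 - t)) ∈ XL (revG G θ c hc).lang := by
  intro m n
  obtain ⟨u, p, horb, m', hm'⟩ := hz (-m - n) n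
  have hpt : ∀ j : ℕ, j < n → u (m' + j) = z ((-m - n) + j) := by
    intro j hj
    have h4 := congrArg (fun l : List A => l[j]?) hm'
    simp only [List.getElem?_ofFn, List.length_ofFn, List.ofFnNthVal] at h4
    rw [dif_pos (show j < n by omega), dif_pos (show j < n by omega)] at h4
    simpa using h4
  refine ⟨fun t => u (-1 - t), fun t => p (-t), revG_orbit G θ c hc u p horb, -m' - n, ?_⟩
  apply List.ext_getElem (by simp)
  intro i h1 h2
  simp only [List.getElem_ofFn]
  have h3 : i < n := by simpa using h2
  have h4 := hpt (n - 1 - i) (by omega)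
  show u (-1 - (-m' - n + (i:ℕ))) = z (-1 - (m + (i:ℕ)))
  have e1 : (-1 : ℤ) - (-m' - n + (i:ℕ)) = m' + ((n - 1 - i : ℕ) : ℤ) := by omega
  have e2 : (-m - n : ℤ) + ((n - 1 - i : ℕ):ℤ) = -1 - (m + (i:ℕ)) := by omega
  rw [e1, h4, e2]

end Stmt17aux

end Aux17

/-- for an `F`-flipped affine interval exchange transformation
with slopes `±exp (θ e)`, any non-recurrent sequence `z` of `X_{L(T)}` has both
series `Σ_{n≥0} exp (Σ_{j=0}^{n} θ_{z_j})` and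
`Σ_{n>0} exp (−Σ_{j=−n}^{−1} θ_{z_j})` convergent. -/
theorem stmt17 [Fintype A] (F : Finset A) [DecidableEq A] (G : GIET A F)
    (θ : A → ℝ)
    (haff : ∀ e, ∃ c : ℝ, ∀ x ∈ Set.Ioo (G.l e) (G.r e),
      G.T x = (if e ∈ F then -Real.exp (θ e) else Real.exp (θ e)) * x + c)
    (z : ℤ → A) (hz : z ∈ XL G.lang) (hnr : ¬ RecurrentZ z) :
    Summable (fun n : ℕ =>
      Real.exp (∑ j ∈ Finset.range (n + 1), θ (z (j : ℤ)))) ∧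
    Summable (fun n : ℕ =>
      Real.exp (-∑ j ∈ Finset.range (n + 1), θ (z (-(j : ℤ) - 1)))) := by
  classical
  set c : A → ℝ := fun e => (haff e).choose with hcdef
  have hc : ∀ e, ∀ x ∈ Set.Ioo (G.l e) (G.r e), G.T x = Stmt17aux.sl F θ e * x + c e := by
    intro e x hx
    rw [(haff e).choose_spec x hx]
    simp only [Stmt17aux.sl, hcdef]
  rcases not_and_or.mp hnr with hR | hL
  · obtain ⟨a, ℓ, hv⟩ := Stmt17aux.extract_right z hR
    exact Stmt17aux.core G z θ c hc hz a ℓ hv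
  · obtain ⟨a, ℓ, hv⟩ := Stmt17aux.extract_right (fun t : ℤ => z (-1 - t))
      (Stmt17aux.notRightRec_rev z hL)
    have hzr := Stmt17aux.revG_XL G z θ c hc hz
    have hcrev : ∀ e, ∀ y ∈ Set.Ioo ((Stmt17aux.revG G θ c hc).l e)
        ((Stmt17aux.revG G θ c hc).r e),
        (Stmt17aux.revG G θ c hc).T y = Stmt17aux.sl F (fun f => -θ f) e * y
          + (-(c e) * Stmt17aux.sl F (fun f => -θ f) e) := by
      intro e y hy
      exact Stmt17aux.Tinv_affine G θ c hc hy
    obtain ⟨h1, h2⟩ := Stmt17aux.core (Stmt17aux.revG G θ c hc) (fun t : ℤ => z (-1 - t))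
      (fun f => -θ f) (fun e => -(c e) * Stmt17aux.sl F (fun f => -θ f) e) hcrev hzr a ℓ hv
    constructor
    · refine h2.congr fun n => ?_
      have hterm : ∀ j : ℕ, θ ((fun t : ℤ => z (-1 - t)) (-(j:ℤ) - 1)) = θ (z (j:ℤ)) := by
        intro j
        show θ (z (-1 - (-(j:ℤ) - 1))) = θ (z (j:ℤ))
        congr 1
        ring_nf
      congr 1
      rw [Finset.sum_neg_distrib, neg_neg]
      exact Finset.sum_congr rfl fun j _ => hterm j
    · refine h1.congr fun n => ?_
      have hterm : ∀ j : ℕ, θ ((fun t : ℤ => z (-1 - t)) (j:ℤ)) = θ (z (-(j:ℤ) - 1)) := by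
        intro j
        show θ (z (-1 - (j:ℤ))) = θ (z (-(j:ℤ) - 1))
        congr 1
        ring_nf
      congr 1
      rw [Finset.sum_neg_distrib]
      congr 1
      exact Finset.sum_congr rfl fun j _ => hterm j
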